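/- For the SL(2)-type cluster data, the explicit map Ξ_{s₁}(y₀, y₁, t) = (y₀·(1 + y₁⁻¹)⁻¹·(1 + y₁⁻¹t)⁻¹, y₁⁻¹t, t) on (ℂ*)³ (defined where 1 + y₁⁻¹ ≠ 0 and 1 + y₁⁻¹t ≠ 0) is Poisson from the bracket {y₀,y₁} = y₀y₁, {y₀,t} = {y₁,t} = 0 to the bracket {z₀,z₁} = −z₀z₁, {z₀,t} = {z₁,t} = 0. -/

import Mathlib

/-- The map `Ξ_{s₁}(y₀,y₁,t) = (y₀(1+y₁⁻¹)⁻¹(1+y₁⁻¹t)⁻¹, y₁⁻¹t, t)` is Poisson from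
the bracket `{y₀,y₁} = y₀y₁`, `{y₀,t} = {y₁,t} = 0` to the bracket
`{z₀,z₁} = -z₀z₁`, `{z₀,t} = {z₁,t} = 0`: the chain-rule pullback brackets of the
component functions agree with the target brackets. -/
theorem Xi_s1_poisson (y₀ y₁ t : ℂ) (h₀ : y₀ ≠ 0) (h₁ : y₁ ≠ 0) (ht : t ≠ 0)
    (ha : 1 + y₁⁻¹ ≠ 0) (hb : 1 + y₁⁻¹ * t ≠ 0) :
    (deriv (fun a : ℂ => a * (1 + y₁⁻¹)⁻¹ * (1 + y₁⁻¹ * t)⁻¹) y₀ *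
            deriv (fun b : ℂ => b⁻¹ * t) y₁ -
          deriv (fun b : ℂ => y₀ * (1 + b⁻¹)⁻¹ * (1 + b⁻¹ * t)⁻¹) y₁ *
            deriv (fun _ : ℂ => y₁⁻¹ * t) y₀) * (y₀ * y₁) =
        -((y₀ * (1 + y₁⁻¹)⁻¹ * (1 + y₁⁻¹ * t)⁻¹) * (y₁⁻¹ * t)) ∧
      (deriv (fun a : ℂ => a * (1 + y₁⁻¹)⁻¹ * (1 + y₁⁻¹ * t)⁻¹) y₀ *
            deriv (fun _ : ℂ => t) y₁ -
          deriv (fun b : ℂ => y₀ * (1 + b⁻¹)⁻¹ * (1 + b⁻¹ * t)⁻¹) y₁ *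
            deriv (fun _ : ℂ => t) y₀) * (y₀ * y₁) = 0 ∧
      (deriv (fun _ : ℂ => y₁⁻¹ * t) y₀ * deriv (fun _ : ℂ => t) y₁ -
          deriv (fun b : ℂ => b⁻¹ * t) y₁ * deriv (fun _ : ℂ => t) y₀) * (y₀ * y₁) = 0 := by
  have hd1 : deriv (fun a : ℂ => a * (1 + y₁⁻¹)⁻¹ * (1 + y₁⁻¹ * t)⁻¹) y₀
      = 1 * (1 + y₁⁻¹)⁻¹ * (1 + y₁⁻¹ * t)⁻¹ :=
    (((hasDerivAt_id y₀).mul_const _).mul_const _).deriv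
  have hd2 : deriv (fun b : ℂ => b⁻¹ * t) y₁ = -(y₁ ^ 2)⁻¹ * t :=
    ((hasDerivAt_inv h₁).mul_const t).deriv
  have h1' : HasDerivAt (fun b : ℂ => 1 + b⁻¹) (-(y₁ ^ 2)⁻¹) y₁ :=
    (hasDerivAt_inv h₁).const_add 1
  have h2' : HasDerivAt (fun b : ℂ => 1 + b⁻¹ * t) (-(y₁ ^ 2)⁻¹ * t) y₁ :=
    ((hasDerivAt_inv h₁).mul_const t).const_add 1
  have hf := ((h1'.inv ha).const_mul y₀).mul (h2'.inv hb)
  have hd3 : deriv (fun b : ℂ => y₀ * (1 + b⁻¹)⁻¹ * (1 + b⁻¹ * t)⁻¹) y₁ =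
      y₀ * (- -(y₁ ^ 2)⁻¹ / (1 + y₁⁻¹) ^ 2) * (1 + y₁⁻¹ * t)⁻¹ +
        y₀ * (1 + y₁⁻¹)⁻¹ * (-(-(y₁ ^ 2)⁻¹ * t) / (1 + y₁⁻¹ * t) ^ 2) := hf.deriv
  rw [hd1, hd2, hd3]
  simp only [deriv_const']
  have ea : 1 + y₁⁻¹ = y₁⁻¹ * (y₁ + 1) := by field_simp
  have eb : 1 + y₁⁻¹ * t = y₁⁻¹ * (y₁ + t) := by field_simp
  have ha' : y₁ + 1 ≠ 0 := by intro h; exact ha (by rw [ea, h, mul_zero])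
  have hb' : y₁ + t ≠ 0 := by intro h; exact hb (by rw [eb, h, mul_zero])
  refine ⟨?_, by ring, by ring⟩
  rw [ea, eb]
  field_simp
  ring
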